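/- Let f : ℝⁿ → ℝ be three times continuously differentiable with L-Lipschitz third derivative. If ∇f(x) = 0, ∇²f(x) is positive semidefinite, and there exists a unit vector u with uᵀ∇²f(x)u = 0 but ∇³f(x)(u,u,u) = c > 0, then for every 0 < ε < 2c/L we have f(x - εu) ≤ f(x) - cε³/12; in particular x is not a third order local minimum. -/

import Mathlib

noncomputable def frob3 {n : ℕ}
    (T : ContinuousMultilinearMap ℝ (fun _ : Fin 3 => EuclideanSpace ℝ (Fin n)) ℝ) : ℝ :=
  Real.sqrt (∑ i : Fin n, ∑ j : Fin n, ∑ k : Fin n,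
    (T ![EuclideanSpace.single i 1, EuclideanSpace.single j 1, EuclideanSpace.single k 1]) ^ 2)

lemma frob3_nonneg {n : ℕ}
    (T : ContinuousMultilinearMap ℝ (fun _ : Fin 3 => EuclideanSpace ℝ (Fin n)) ℝ) :
    0 ≤ frob3 T := Real.sqrt_nonneg _

lemma frob3_eq_pi {n : ℕ}
    (T : ContinuousMultilinearMap ℝ (fun _ : Fin 3 => EuclideanSpace ℝ (Fin n)) ℝ) :
    frob3 T = Real.sqrt (∑ r : Fin 3 → Fin n,
      (T (fun l => EuclideanSpace.single (r l) 1)) ^ 2) := by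
  unfold frob3
  congr 1
  have h1 : ∑ i : Fin n, ∑ j : Fin n, ∑ k : Fin n,
      (T ![EuclideanSpace.single i 1, EuclideanSpace.single j 1, EuclideanSpace.single k 1]) ^ 2
      = ∑ p : Fin n × Fin n × Fin n,
      (T ![EuclideanSpace.single p.1 1, EuclideanSpace.single p.2.1 1,
        EuclideanSpace.single p.2.2 1]) ^ 2 := by
    rw [Fintype.sum_prod_type]
    refine Finset.sum_congr rfl fun i _ => ?_
    rw [Fintype.sum_prod_type]
  rw [h1]
  apply Fintype.sum_equiv (⟨fun p : Fin n × Fin n × Fin n => ![p.1, p.2.1, p.2.2],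
    fun r => (r 0, r 1, r 2), fun p => rfl,
    fun r => by funext l; fin_cases l <;> rfl⟩ :
    (Fin n × Fin n × Fin n) ≃ (Fin 3 → Fin n))
  intro p
  have h2 : (![EuclideanSpace.single p.1 1, EuclideanSpace.single p.2.1 1,
      EuclideanSpace.single p.2.2 1] : Fin 3 → EuclideanSpace ℝ (Fin n))
      = fun l => EuclideanSpace.single ((![p.1, p.2.1, p.2.2] : Fin 3 → Fin n) l) 1 := by
    funext l; fin_cases l <;> rfl
  rw [h2]
  rfl

lemma frob3_bound {n : ℕ}
    (T : ContinuousMultilinearMap ℝ (fun _ : Fin 3 => EuclideanSpace ℝ (Fin n)) ℝ)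
    (v : EuclideanSpace ℝ (Fin n)) (hv : ‖v‖ = 1) :
    |T (fun _ => v)| ≤ frob3 T := by
  classical
  have hv2 : ∑ i : Fin n, (v i) ^ 2 = 1 := by
    have h := hv
    rw [EuclideanSpace.norm_eq] at h
    have h2 : ∑ i : Fin n, ‖v i‖ ^ 2 = 1 := by
      have := Real.sqrt_eq_one.mp h
      simpa using this
    simpa [sq_abs] using h2
  have hdecomp : v = ∑ i : Fin n, v i • EuclideanSpace.single i 1 := by
    ext j
    rw [WithLp.ofLp_sum, Fintype.sum_apply]
    simp [EuclideanSpace.single_apply]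
  have hexp : T (fun _ => v) = ∑ r : Fin 3 → Fin n,
      (∏ l, v (r l)) * (T (fun l => EuclideanSpace.single (r l) 1)) := by
    conv_lhs => rw [show (fun _ : Fin 3 => v) = fun _ : Fin 3 => ∑ i : Fin n, v i • EuclideanSpace.single i 1 from funext fun _ => hdecomp]
    rw [T.map_sum_finset (fun l i => v i • EuclideanSpace.single i 1) (fun _ => Finset.univ)]
    rw [Fintype.piFinset_univ]
    refine Finset.sum_congr rfl fun r _ => ?_
    rw [T.map_smul_univ]
    simp [smul_eq_mul]
  rw [hexp, frob3_eq_pi]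
  have cs := Finset.sum_mul_sq_le_sq_mul_sq Finset.univ
    (fun r : Fin 3 → Fin n => ∏ l, v (r l))
    (fun r => T (fun l => EuclideanSpace.single (r l) 1))
  have ha : ∑ r : Fin 3 → Fin n, (∏ l, v (r l)) ^ 2 = 1 := by
    have h3 : ∑ r : Fin 3 → Fin n, ∏ l : Fin 3, (v (r l)) ^ 2
        = ∏ _l : Fin 3, ∑ i : Fin n, (v i) ^ 2 := by
      rw [Finset.prod_univ_sum]
      simp [Fintype.piFinset_univ]
    simp only [← Finset.prod_pow] at h3 ⊢
    rw [h3, hv2]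
    simp
  rw [ha, one_mul] at cs
  calc |∑ r : Fin 3 → Fin n, (∏ l, v (r l)) * (T (fun l => EuclideanSpace.single (r l) 1))|
      = Real.sqrt ((∑ r : Fin 3 → Fin n, (∏ l, v (r l)) * (T (fun l => EuclideanSpace.single (r l) 1))) ^ 2) := (Real.sqrt_sq_eq_abs _).symm
    _ ≤ _ := Real.sqrt_le_sqrt cs


lemma compare_aux (g p g' p' : ℝ → ℝ)
    (hg : ∀ t, HasDerivAt g (g' t) t) (hp : ∀ t, HasDerivAt p (p' t) t)
    (h0 : g 0 ≤ p 0) (hle : ∀ t, 0 ≤ t → g' t ≤ p' t) :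
    ∀ t, 0 ≤ t → g t ≤ p t := by
  have hanti : AntitoneOn (fun t => g t - p t) (Set.Ici 0) := by
    apply antitoneOn_of_deriv_nonpos (convex_Ici 0)
    · exact (Continuous.continuousOn (by
        exact continuous_iff_continuousAt.2 fun t =>
          (((hg t).sub (hp t)).differentiableAt).continuousAt))
    · intro t ht
      exact (((hg t).sub (hp t)).differentiableAt).differentiableWithinAt
    · intro t ht
      rw [interior_Ici] at ht
      rw [show (fun t => g t - p t) = g - p from rfl, ((hg t).sub (hp t)).deriv]
      exact sub_nonpos.2 (hle t ht.le)
  intro t ht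
  have := hanti Set.self_mem_Ici ht ht
  simpa using sub_nonpos.1 (le_trans this (by simpa using sub_nonpos.2 h0))

variable {n : ℕ}

lemma hasDerivAt_iter (f : EuclideanSpace ℝ (Fin n) → ℝ) (hf : ContDiff ℝ 3 f)
    (x v : EuclideanSpace ℝ (Fin n)) (k : ℕ) (hk : k < 3) (t : ℝ) :
    HasDerivAt (fun s => iteratedFDeriv ℝ k f (x + s • v) (fun _ => v))
      (iteratedFDeriv ℝ (k + 1) f (x + t • v) (fun _ => v)) t := by
  have hφ : HasDerivAt (fun s : ℝ => x + s • v) v t := by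
    simpa using ((hasDerivAt_id t).smul_const v).const_add x
  have hd : Differentiable ℝ (iteratedFDeriv ℝ k f) :=
    hf.differentiable_iteratedFDeriv (by exact_mod_cast hk)
  have h2 := ((hd (x + t • v)).hasFDerivAt).comp_hasDerivAt t hφ
  have h3 := ((ContinuousMultilinearMap.apply ℝ (fun _ : Fin k => EuclideanSpace ℝ (Fin n)) ℝ
    (fun _ => v)).hasFDerivAt).comp_hasDerivAt t h2
  exact h3

lemma hasDerivAt_base (f : EuclideanSpace ℝ (Fin n) → ℝ) (hf : ContDiff ℝ 3 f)
    (x v : EuclideanSpace ℝ (Fin n)) (t : ℝ) :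
    HasDerivAt (fun s => f (x + s • v))
      (iteratedFDeriv ℝ 1 f (x + t • v) (fun _ => v)) t := by
  have hφ : HasDerivAt (fun s : ℝ => x + s • v) v t := by
    simpa using ((hasDerivAt_id t).smul_const v).const_add x
  have h2 := ((hf.differentiable (by norm_num) (x + t • v)).hasFDerivAt).comp_hasDerivAt t hφ
  rw [iteratedFDeriv_one_apply]
  exact h2

section polys
variable (c L : ℝ)

lemma hp2 : ∀ t : ℝ, HasDerivAt (fun s => -c * s + L * s ^ 2 / 2) (-c + L * t) t := by
  intro t
  have h := ((hasDerivAt_pow 2 t).const_mul L).div_const 2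
  have h' := (hasDerivAt_id t).const_mul (-c)
  refine (h'.add h).congr_deriv ?_
  push_cast; ring

lemma hp1 : ∀ t : ℝ, HasDerivAt (fun s => -c * s ^ 2 / 2 + L * s ^ 3 / 6)
    (-c * t + L * t ^ 2 / 2) t := by
  intro t
  have h := ((hasDerivAt_pow 2 t).const_mul (-c)).div_const 2
  have h' := ((hasDerivAt_pow 3 t).const_mul L).div_const 6
  refine (h.add h').congr_deriv ?_
  push_cast; ring

lemma hp0 (fx : ℝ) : ∀ t : ℝ, HasDerivAt (fun s => fx - c * s ^ 3 / 6 + L * s ^ 4 / 24)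
    (-c * t ^ 2 / 2 + L * t ^ 3 / 6) t := by
  intro t
  have h := (((hasDerivAt_pow 3 t).const_mul (-c)).div_const 6).const_add fx
  have h' := ((hasDerivAt_pow 4 t).const_mul L).div_const 24
  have e : (fun s => fx - c * s ^ 3 / 6 + L * s ^ 4 / 24)
      = (fun x => fx + -c * x ^ 3 / 6) + fun x => L * x ^ 4 / 24 := by
    funext s; simp only [Pi.add_apply]; ring
  rw [e]
  refine (h.add h').congr_deriv ?_
  push_cast; ring

end polys

theorem third_order_direction_escapes {n : ℕ} (f : EuclideanSpace ℝ (Fin n) → ℝ)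
    (L : ℝ) (hf : ContDiff ℝ 3 f)
    (hLip : ∀ x y, frob3 (iteratedFDeriv ℝ 3 f x - iteratedFDeriv ℝ 3 f y) ≤ L * ‖x - y‖)
    (x u : EuclideanSpace ℝ (Fin n)) (c : ℝ)
    (hgrad : gradient f x = 0)
    (hpsd : ∀ v, 0 ≤ iteratedFDeriv ℝ 2 f x ![v, v])
    (hu : ‖u‖ = 1)
    (hker : iteratedFDeriv ℝ 2 f x ![u, u] = 0)
    (hc : iteratedFDeriv ℝ 3 f x ![u, u, u] = c)
    (hcpos : 0 < c) :
    (∀ ε : ℝ, 0 < ε → ε < 2 * c / L → f (x - ε • u) ≤ f x - c * ε ^ 3 / 12) ∧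
    ¬ (∃ C > 0, ∃ ε > 0, ∀ y, ‖y - x‖ ≤ ε → f y ≥ f x - C * ‖y - x‖ ^ 4) := by
  -- setup
  set v := -u with hvdef
  have hv : ‖v‖ = 1 := by rw [hvdef, norm_neg, hu]
  have hL0 : 0 ≤ L := by
    have h := hLip (x + u) x
    have h1 : ‖x + u - x‖ = 1 := by simpa using hu
    rw [h1, mul_one] at h
    exact le_trans (frob3_nonneg _) h
  -- derivative of f at x vanishes
  have hfderiv : fderiv ℝ f x = 0 := by
    have h := hgrad
    unfold gradient at h
    rw [LinearIsometryEquiv.map_eq_zero_iff] at h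
    exact h
  -- evaluations at 0
  have hx0 : x + (0 : ℝ) • v = x := by simp
  have A1 : iteratedFDeriv ℝ 1 f x (fun _ => v) = 0 := by
    rw [iteratedFDeriv_one_apply, hfderiv]; rfl
  have A2 : iteratedFDeriv ℝ 2 f x (fun _ : Fin 2 => v) = 0 := by
    have e1 : (fun _ : Fin 2 => v) = fun i => (-1 : ℝ) • (![u, u] i) := by
      funext i; fin_cases i <;> simp [hvdef]
    rw [e1, (iteratedFDeriv ℝ 2 f x).map_smul_univ]
    simp [hker]
  have A3 : iteratedFDeriv ℝ 3 f x (fun _ : Fin 3 => v) = -c := by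
    have e1 : (fun _ : Fin 3 => v) = fun i => (-1 : ℝ) • (![u, u, u] i) := by
      funext i; fin_cases i <;> simp [hvdef]
    rw [e1, (iteratedFDeriv ℝ 3 f x).map_smul_univ]
    simp [hc]
    ring
  -- Lipschitz bound on the third directional derivative
  have hper : ∀ t : ℝ, 0 ≤ t →
      iteratedFDeriv ℝ 3 f (x + t • v) (fun _ => v) ≤ -c + L * t := by
    intro t ht
    have hb := frob3_bound (iteratedFDeriv ℝ 3 f (x + t • v) - iteratedFDeriv ℝ 3 f x) v hv
    have hL := hLip (x + t • v) x
    have hnorm : ‖x + t • v - x‖ = t := by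
      simp [norm_smul, hv, abs_of_nonneg ht]
    rw [hnorm] at hL
    have hsub : (iteratedFDeriv ℝ 3 f (x + t • v) - iteratedFDeriv ℝ 3 f x) (fun _ => v)
        = iteratedFDeriv ℝ 3 f (x + t • v) (fun _ => v)
          - iteratedFDeriv ℝ 3 f x (fun _ => v) := rfl
    rw [hsub, A3] at hb
    have := le_trans (le_trans (le_abs_self _) hb) hL
    linarith
  -- chain of comparisons
  have step2 : ∀ t : ℝ, 0 ≤ t →
      iteratedFDeriv ℝ 2 f (x + t • v) (fun _ => v) ≤ -c * t + L * t ^ 2 / 2 := by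
    apply compare_aux _ _ (fun t => iteratedFDeriv ℝ 3 f (x + t • v) (fun _ => v)) _
      (hasDerivAt_iter f hf x v 2 (by norm_num)) (hp2 c L)
    · rw [show ((2 : ℕ) : ℕ) = 2 from rfl]
      simp only [hx0]
      rw [A2]; norm_num
    · exact hper
  have step1 : ∀ t : ℝ, 0 ≤ t →
      iteratedFDeriv ℝ 1 f (x + t • v) (fun _ => v) ≤ -c * t ^ 2 / 2 + L * t ^ 3 / 6 := by
    apply compare_aux _ _ (fun t => iteratedFDeriv ℝ 2 f (x + t • v) (fun _ => v)) _
      (hasDerivAt_iter f hf x v 1 (by norm_num)) (hp1 c L)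
    · simp only [hx0]
      rw [A1]; norm_num
    · exact step2
  have core : ∀ t : ℝ, 0 ≤ t →
      f (x + t • v) ≤ f x - c * t ^ 3 / 6 + L * t ^ 4 / 24 := by
    apply compare_aux _ _ (fun t => iteratedFDeriv ℝ 1 f (x + t • v) (fun _ => v)) _
      (hasDerivAt_base f hf x v) (hp0 c L (f x))
    · simp only [hx0]; norm_num
    · exact step1
  have hxsub : ∀ t : ℝ, x - t • u = x + t • v := by
    intro t; rw [hvdef, smul_neg, sub_eq_add_neg]
  constructor
  · intro ε hε hεL
    have hLpos : 0 < L := by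
      rcases lt_or_eq_of_le hL0 with h | h
      · exact h
      · exfalso; rw [← h] at hεL; simp at hεL; linarith
    have hεL' : ε * L < 2 * c := by
      rw [lt_div_iff₀ hLpos] at hεL; linarith
    have h := core ε hε.le
    rw [hxsub]
    have k1 : ε * L * ε ^ 3 < 2 * c * ε ^ 3 :=
      mul_lt_mul_of_pos_right hεL' (pow_pos hε 3)
    nlinarith [k1, h]
  · rintro ⟨C, hC, ε, hε, hbound⟩
    obtain ⟨t, ht0, ht1, ht2, ht3⟩ : ∃ t : ℝ, 0 < t ∧ t ≤ ε ∧ t ≤ c / (L + 1) ∧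
        t ≤ c / (24 * C) :=
      ⟨min ε (min (c / (L + 1)) (c / (24 * C))),
        lt_min hε (lt_min (by positivity) (by positivity)), min_le_left _ _,
        le_trans (min_le_right _ _) (min_le_left _ _),
        le_trans (min_le_right _ _) (min_le_right _ _)⟩
    have hLt : L * t ≤ c := by
      rw [le_div_iff₀ (by linarith)] at ht2
      nlinarith [ht0.le, hL0]
    have hCt : C * t ≤ c / 24 := by
      rw [le_div_iff₀ (by positivity)] at ht3
      linarith
    have hcore := core t ht0.le
    set y := x + t • v with hydef
    have hynorm : ‖y - x‖ = t := by
      rw [hydef]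
      simp [norm_smul, hv, abs_of_nonneg ht0.le]
    have hb := hbound y (by rw [hynorm]; exact ht1)
    rw [hynorm] at hb
    have k1 : L * t * t ^ 3 ≤ c * t ^ 3 :=
      mul_le_mul_of_nonneg_right hLt (pow_pos ht0 3).le
    have k2 : C * t * t ^ 3 ≤ c / 24 * t ^ 3 :=
      mul_le_mul_of_nonneg_right hCt (pow_pos ht0 3).le
    have k3 : 0 < c * t ^ 3 := mul_pos hcpos (pow_pos ht0 3)
    linarith [k1, k2, k3, hcore, hb]
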